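/- arXiv:1609.03704 — 2 statements merged into one kernel-verified Lean document; each statement's English description precedes it below -/
import Mathlib

section
/- The curvature function of an elastica is bounded, with an explicit bound from the two first integrals: if h1, h2, h3 : ℝ → ℝ are differentiable and satisfy h1' = h3·h2, h2' = -h3, h3' = -h1·h2 on ℝ, then for every s ∈ ℝ one has h2(s)² ≤ 2·(h1(0) + h2(0)²/2) + 2·√(h1(0)² + h3(0)²); in particular |h2| is bounded on ℝ. -/
/-- The curvature `h2` of an elastica is bounded, with an explicit bound
coming from the two first integrals `h1 + h2²/2` and `h1² + h3²` of the
vertical part of the elastica Hamiltonian system. -/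
theorem elastica_curvature_bounded
    (h1 h2 h3 : ℝ → ℝ)
    (hd1 : ∀ s : ℝ, HasDerivAt h1 (h3 s * h2 s) s)
    (hd2 : ∀ s : ℝ, HasDerivAt h2 (-h3 s) s)
    (hd3 : ∀ s : ℝ, HasDerivAt h3 (-(h1 s * h2 s)) s) :
    ∀ s : ℝ, h2 s ^ 2 ≤ 2 * (h1 0 + h2 0 ^ 2 / 2) + 2 * Real.sqrt (h1 0 ^ 2 + h3 0 ^ 2) := by
  intro s
  -- First integral E = h1 + h2^2/2
  have hE : ∀ x : ℝ, HasDerivAt (fun t => h1 t + h2 t ^ 2 / 2) 0 x := by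
    intro x
    have := ((hd1 x).add (((hd2 x).pow 2).div_const 2))
    convert this using 1
    · rfl
    · rfl
    · rfl
    simp [pow_two]
    ring
  have hEconst : ∀ x : ℝ, h1 x + h2 x ^ 2 / 2 = h1 0 + h2 0 ^ 2 / 2 := by
    intro x
    exact is_const_of_deriv_eq_zero (fun y => (hE y).differentiableAt)
      (fun y => (hE y).deriv) x 0
  -- First integral M = h1^2 + h3^2
  have hM : ∀ x : ℝ, HasDerivAt (fun t => h1 t ^ 2 + h3 t ^ 2) 0 x := by
    intro x
    have := (((hd1 x).pow 2).add ((hd3 x).pow 2))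
    convert this using 1
    · rfl
    · rfl
    · rfl
    ring
  have hMconst : ∀ x : ℝ, h1 x ^ 2 + h3 x ^ 2 = h1 0 ^ 2 + h3 0 ^ 2 := by
    intro x
    exact is_const_of_deriv_eq_zero (fun y => (hM y).differentiableAt)
      (fun y => (hM y).deriv) x 0
  have h2sq : h2 s ^ 2 = 2 * (h1 0 + h2 0 ^ 2 / 2) - 2 * h1 s := by
    have := hEconst s; linarith
  have habs : -h1 s ≤ Real.sqrt (h1 0 ^ 2 + h3 0 ^ 2) := by
    have h1le : |h1 s| ≤ Real.sqrt (h1 0 ^ 2 + h3 0 ^ 2) := by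
      rw [← hMconst s, ← Real.sqrt_sq_eq_abs]
      exact Real.sqrt_le_sqrt (by nlinarith [sq_nonneg (h3 s)])
    have := neg_abs_le (h1 s)
    linarith [abs_nonneg (h1 s)]
  linarith
end

section
/- An Euler elastica and the spatial projection of a sub-Riemannian geodesic on SE(2) coincide (after reparameterization of the geodesic projection by spatial arclength) on a nontrivial interval only if both are straight line segments. Precisely: let (x, y, θ, h1, h2, h3) : [a, b] → ℝ⁶ solve the elastica system h1' = h3·h2, h2' = -h3, h3' = -h1·h2, x' = cos θ, y' = sin θ, θ' = h2, and let (x̃, ỹ, θ̃, h̃1, h̃2, h̃3) : [α, β] → ℝ⁶ solve the geodesic system ḣ̃1 = h̃3·h̃2, ḣ̃2 = -h̃3·h̃1, ḣ̃3 = -h̃2·h̃1, ẋ̃ = h̃1·cos θ̃, ẏ̃ = h̃1·sin θ̃, θ̃̇ = h̃2 with h̃1(α)² + h̃2(α)² = 1 and ẋ̃(t)² + ẏ̃(t)² ≠ 0 for all t ∈ [α, β]. Set s(t) = ∫_α^t √(ẋ̃² + ẏ̃²) dτ, S = s(β), and let t(s) be the inverse function of s(t). If (x(s), y(s)) = (x̃(t(s)),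 ỹ(t(s))) for all s in some open interval (c, d) ⊂ [a, b] ∩ [0, S] with c < d, then both plane curves Γ = {(x(s), y(s)) : s ∈ [a, b]} and Γ̃ = {(x̃(t), ỹ(t)) : t ∈ [α, β]} are segments of straight lines (equivalently, h2 ≡ 0 on [a, b] and h̃2 ≡ 0 on [α, β], so there exist points p, p̃ ∈ ℝ² and unit vectors v, ṽ ∈ ℝ² with (x(s), y(s)) = p + s·v and (x̃(t(s)), ỹ(t(s))) = p̃ + s·ṽ). -/
open Set MeasureTheory intervalIntegral

private lemma gronZero_right {A B K : ℝ} {f f' : ℝ → ℝ}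
    (hf : ∀ t ∈ Set.Icc A B, HasDerivWithinAt f (f' t) (Set.Icc A B) t)
    (hb : ∀ t ∈ Set.Icc A B, |f' t| ≤ K * |f t|)
    (h0 : f A = 0) : ∀ t ∈ Set.Icc A B, f t = 0 := by
  intro t ht
  have hcont : ContinuousOn f (Set.Icc A B) := fun u hu => (hf u hu).continuousWithinAt
  have hder : ∀ u ∈ Set.Ico A B, HasDerivWithinAt f (f' u) (Set.Ici u) u := fun u hu =>
    (hf u (Set.Ico_subset_Icc_self hu)).mono_of_mem_nhdsWithin (Icc_mem_nhdsGE_of_mem hu)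
  have hbound : ∀ u ∈ Set.Ico A B, ‖f' u‖ ≤ K * ‖f u‖ + 0 := fun u hu => by
    simpa [Real.norm_eq_abs] using hb u (Set.Ico_subset_Icc_self hu)
  have h := norm_le_gronwallBound_of_norm_deriv_right_le (δ := 0) (K := K) (ε := 0)
    hcont hder (by simp [h0]) hbound t ht
  rw [gronwallBound_ε0_δ0] at h
  exact abs_nonpos_iff.mp (by simpa [Real.norm_eq_abs] using h)

private lemma gronZero_left {A B K : ℝ} {f f' : ℝ → ℝ}
    (hf : ∀ t ∈ Set.Icc A B, HasDerivWithinAt f (f' t) (Set.Icc A B) t)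
    (hb : ∀ t ∈ Set.Icc A B, |f' t| ≤ K * |f t|)
    (h0 : f B = 0) : ∀ t ∈ Set.Icc A B, f t = 0 := by
  intro t ht
  have hmem : ∀ u : ℝ, u ∈ Set.Icc (-B) (-A) → -u ∈ Set.Icc A B := fun u hu =>
    ⟨by linarith [hu.2], by linarith [hu.1]⟩
  have key := gronZero_right (A := -B) (B := -A) (K := K)
    (f := fun u => f (-u)) (f' := fun u => -f' (-u)) ?_ ?_ (by simpa using h0)
  · have := key (-t) ⟨by linarith [ht.2], by linarith [ht.1]⟩
    simpa using this
  · intro u hu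
    have hneg : HasDerivWithinAt (fun v : ℝ => -v) (-1) (Set.Icc (-B) (-A)) u :=
      (hasDerivAt_neg u).hasDerivWithinAt
    have H : HasDerivWithinAt (fun v => f (-v)) (f' (-u) * (-1)) (Set.Icc (-B) (-A)) u :=
      (hf (-u) (hmem u hu)).comp u hneg (fun v hv => hmem v hv)
    show HasDerivWithinAt (fun v => f (-v)) (-f' (-u)) (Set.Icc (-B) (-A)) u
    have hval : -f' (-u) = f' (-u) * (-1) := by ring
    rw [hval]; exact H
  · intro u hu
    simpa using hb (-u) (hmem u hu)

private lemma gronZero {A B K t₀ : ℝ} {f f' : ℝ → ℝ} (ht₀ : t₀ ∈ Set.Icc A B)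
    (hf : ∀ t ∈ Set.Icc A B, HasDerivWithinAt f (f' t) (Set.Icc A B) t)
    (hb : ∀ t ∈ Set.Icc A B, |f' t| ≤ K * |f t|)
    (h0 : f t₀ = 0) : ∀ t ∈ Set.Icc A B, f t = 0 := by
  intro t ht
  rcases le_total t t₀ with h | h
  · exact gronZero_left (A := A) (B := t₀)
      (fun u hu => (hf u (Set.Icc_subset_Icc_right ht₀.2 hu)).mono
        (Set.Icc_subset_Icc_right ht₀.2))
      (fun u hu => hb u (Set.Icc_subset_Icc_right ht₀.2 hu)) h0 t ⟨ht.1, h⟩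
  · exact gronZero_right (A := t₀) (B := B)
      (fun u hu => (hf u (Set.Icc_subset_Icc_left ht₀.1 hu)).mono
        (Set.Icc_subset_Icc_left ht₀.1))
      (fun u hu => hb u (Set.Icc_subset_Icc_left ht₀.1 hu)) h0 t ⟨h, ht.2⟩

private lemma constOn {A B t₀ : ℝ} {f : ℝ → ℝ} (ht₀ : t₀ ∈ Set.Icc A B)
    (hf : ∀ t ∈ Set.Icc A B, HasDerivWithinAt f 0 (Set.Icc A B) t) :
    ∀ t ∈ Set.Icc A B, f t = f t₀ := by
  intro t ht
  have h := gronZero (K := 0) (f := fun u => f u - f t₀) (f' := fun _ => 0) ht₀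
    (fun u hu => (hf u hu).sub_const _)
    (fun u hu => by simp) (by simp) t ht
  have h' : f t - f t₀ = 0 := h
  linarith

private lemma derivEq {f g : ℝ → ℝ} {f' g' t : ℝ} {U : Set ℝ} (hU : IsOpen U) (ht : t ∈ U)
    (heq : ∀ u ∈ U, f u = g u) (hf : HasDerivAt f f' t) (hg : HasDerivAt g g' t) :
    f' = g' := by
  have hev : f =ᶠ[nhds t] g := Filter.eventuallyEq_of_mem (hU.mem_nhds ht) heq
  exact (hev.hasDerivAt_iff.mp hf).unique hg

private lemma signConst {A B : ℝ} {g : ℝ → ℝ} (hg : ContinuousOn g (Set.Icc A B))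
    (hne : ∀ t ∈ Set.Icc A B, g t ≠ 0) {t₁ t₂ : ℝ} (h₁ : t₁ ∈ Set.Icc A B)
    (h₂ : t₂ ∈ Set.Icc A B) (hp : 0 < g t₁) : 0 < g t₂ := by
  by_contra hcon
  have h2 : g t₂ < 0 := lt_of_le_of_ne (not_lt.mp hcon) (hne t₂ h₂)
  have hsubi : Set.uIcc t₁ t₂ ⊆ Set.Icc A B := Set.uIcc_subset_Icc h₁ h₂
  have h0 : (0:ℝ) ∈ Set.uIcc (g t₁) (g t₂) := by
    rw [Set.mem_uIcc]; right; exact ⟨h2.le, hp.le⟩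
  obtain ⟨u, hu, hu0⟩ := intermediate_value_uIcc (hg.mono hsubi) h0
  exact hne u (hsubi hu) hu0


set_option maxHeartbeats 1000000 in
/-- Theorem 1 of the paper: if an Euler elastica and the spatial projection of
a cusp-free sub-Riemannian geodesic on SE(2) (the latter reparameterized by
spatial arclength via the inverse `tfun` of `sfun t = ∫_α^t √(ẋ̃² + ẏ̃²) dτ`)
coincide on a nontrivial interval (c, d), then both plane curves are straight
line segments: the curvatures h2 and h̃2 vanish identically and both curves are
affine in their arclength parameters with unit direction vectors. -/
theorem elastica_eq_srGeodesic_iff_straight_line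
    (a b α β : ℝ) (hab : a < b) (hαβ : α < β)
    -- the elastica: solution of the elastica Hamiltonian system on [a, b]
    (x y θ h1 h2 h3 : ℝ → ℝ)
    (e1 : ∀ s ∈ Set.Icc a b, HasDerivWithinAt h1 (h3 s * h2 s) (Set.Icc a b) s)
    (e2 : ∀ s ∈ Set.Icc a b, HasDerivWithinAt h2 (-h3 s) (Set.Icc a b) s)
    (e3 : ∀ s ∈ Set.Icc a b, HasDerivWithinAt h3 (-(h1 s * h2 s)) (Set.Icc a b) s)
    (ex : ∀ s ∈ Set.Icc a b, HasDerivWithinAt x (Real.cos (θ s)) (Set.Icc a b) s)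
    (ey : ∀ s ∈ Set.Icc a b, HasDerivWithinAt y (Real.sin (θ s)) (Set.Icc a b) s)
    (eθ : ∀ s ∈ Set.Icc a b, HasDerivWithinAt θ (h2 s) (Set.Icc a b) s)
    -- the geodesic: solution of the SR geodesic Hamiltonian system on [α, β]
    (xt yt θt g1 g2 g3 : ℝ → ℝ)
    (f1 : ∀ t ∈ Set.Icc α β, HasDerivWithinAt g1 (g3 t * g2 t) (Set.Icc α β) t)
    (f2 : ∀ t ∈ Set.Icc α β, HasDerivWithinAt g2 (-(g3 t * g1 t)) (Set.Icc α β) t)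
    (f3 : ∀ t ∈ Set.Icc α β, HasDerivWithinAt g3 (-(g2 t * g1 t)) (Set.Icc α β) t)
    (fx : ∀ t ∈ Set.Icc α β,
      HasDerivWithinAt xt (g1 t * Real.cos (θt t)) (Set.Icc α β) t)
    (fy : ∀ t ∈ Set.Icc α β,
      HasDerivWithinAt yt (g1 t * Real.sin (θt t)) (Set.Icc α β) t)
    (fθ : ∀ t ∈ Set.Icc α β, HasDerivWithinAt θt (g2 t) (Set.Icc α β) t)
    -- unit covector: SR-arclength parameterization
    (hunit : g1 α ^ 2 + g2 α ^ 2 = 1)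
    -- no cusp points: ẋ̃² + ẏ̃² ≠ 0 on [α, β]
    (hnocusp : ∀ t ∈ Set.Icc α β,
      (g1 t * Real.cos (θt t)) ^ 2 + (g1 t * Real.sin (θt t)) ^ 2 ≠ 0)
    -- the spatial arclength function s(t) = ∫_α^t √(ẋ̃² + ẏ̃²) dτ
    (sfun : ℝ → ℝ)
    (hsfun : ∀ t, sfun t =
      ∫ τ in α..t,
        Real.sqrt ((g1 τ * Real.cos (θt τ)) ^ 2 + (g1 τ * Real.sin (θt τ)) ^ 2))
    -- tfun is the inverse function t(s) of s(t)
    (tfun : ℝ → ℝ)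
    (htfun₁ : ∀ t ∈ Set.Icc α β, tfun (sfun t) = t)
    (htfun₂ : ∀ s ∈ Set.Icc 0 (sfun β), sfun (tfun s) = s)
    -- the two spatial projections coincide on a nontrivial interval (c, d)
    (c d : ℝ) (hcd : c < d)
    (hsub : Set.Ioo c d ⊆ Set.Icc a b ∩ Set.Icc 0 (sfun β))
    (hcoin : ∀ s ∈ Set.Ioo c d, x s = xt (tfun s) ∧ y s = yt (tfun s)) :
    -- conclusion: both curves are straight line segments
    (∀ s ∈ Set.Icc a b, h2 s = 0) ∧ (∀ t ∈ Set.Icc α β, g2 t = 0) ∧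
    ∃ p₁ p₂ q₁ q₂ v₁ v₂ w₁ w₂ : ℝ,
      v₁ ^ 2 + v₂ ^ 2 = 1 ∧ w₁ ^ 2 + w₂ ^ 2 = 1 ∧
      (∀ s ∈ Set.Icc a b, x s = p₁ + s * v₁ ∧ y s = p₂ + s * v₂) ∧
      (∀ s ∈ Set.Icc 0 (sfun β),
        xt (tfun s) = q₁ + s * w₁ ∧ yt (tfun s) = q₂ + s * w₂) := by
  classical
  have hab' : a ≤ b := hab.le
  have hαβ' : α ≤ β := hαβ.le
  set h : ℝ → ℝ :=
    fun τ => Real.sqrt ((g1 τ * Real.cos (θt τ)) ^ 2 + (g1 τ * Real.sin (θt τ)) ^ 2) with hh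
  have hsq : ∀ τ, (g1 τ * Real.cos (θt τ)) ^ 2 + (g1 τ * Real.sin (θt τ)) ^ 2 = g1 τ ^ 2 := by
    intro τ
    have hpy := Real.sin_sq_add_cos_sq (θt τ)
    nlinarith [hpy]
  have habs : ∀ τ, h τ = |g1 τ| := by
    intro τ
    show Real.sqrt _ = _
    rw [hsq τ]
    exact Real.sqrt_sq_eq_abs _
  -- continuity of the data
  have cg1 : ContinuousOn g1 (Set.Icc α β) := fun t ht => (f1 t ht).continuousWithinAt
  have cg2 : ContinuousOn g2 (Set.Icc α β) := fun t ht => (f2 t ht).continuousWithinAt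
  have cg3 : ContinuousOn g3 (Set.Icc α β) := fun t ht => (f3 t ht).continuousWithinAt
  have cθt : ContinuousOn θt (Set.Icc α β) := fun t ht => (fθ t ht).continuousWithinAt
  have ch1 : ContinuousOn h1 (Set.Icc a b) := fun s hs => (e1 s hs).continuousWithinAt
  -- g1 has no zeroes
  have hg1ne : ∀ t ∈ Set.Icc α β, g1 t ≠ 0 := by
    intro t ht hz
    apply hnocusp t ht
    rw [hsq, hz]
    ring
  -- the sign of g1
  obtain ⟨σ, hσ1, hσpos⟩ : ∃ σ : ℝ, (σ = 1 ∨ σ = -1) ∧ ∀ t ∈ Set.Icc α β, 0 < σ * g1 t := by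
    rcases lt_or_gt_of_ne (hg1ne α (Set.left_mem_Icc.mpr hαβ')) with hneg | hpos
    · refine ⟨-1, Or.inr rfl, fun t ht => ?_⟩
      have := signConst (g := fun u => -g1 u) cg1.neg
        (fun u hu => neg_ne_zero.mpr (hg1ne u hu)) (Set.left_mem_Icc.mpr hαβ') ht
        (by simpa using hneg)
      simpa using this
    · refine ⟨1, Or.inl rfl, fun t ht => ?_⟩
      have := signConst cg1 hg1ne (Set.left_mem_Icc.mpr hαβ') ht hpos
      linarith
  have hσsq : σ ^ 2 = 1 := by rcases hσ1 with h'|h' <;> rw [h'] <;> norm_num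
  have hσne : σ ≠ 0 := by rcases hσ1 with h'|h' <;> rw [h'] <;> norm_num
  have habs' : ∀ t ∈ Set.Icc α β, h t = σ * g1 t := by
    intro t ht
    rw [habs]
    rcases hσ1 with h'|h'
    · subst h'
      have := hσpos t ht
      rw [one_mul] at this ⊢
      exact abs_of_pos this
    · subst h'
      have := hσpos t ht
      have hneg : g1 t < 0 := by linarith
      rw [abs_of_neg hneg]
      ring
  -- integrability and continuity of sfun
  have hch : ContinuousOn h (Set.Icc α β) := by
    apply Real.continuous_sqrt.comp_continuousOn
    exact ((cg1.mul (Real.continuous_cos.comp_continuousOn cθt)).pow 2).add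
      ((cg1.mul (Real.continuous_sin.comp_continuousOn cθt)).pow 2)
  have hint : ∀ t1 t2, t1 ∈ Set.Icc α β → t2 ∈ Set.Icc α β →
      IntervalIntegrable h MeasureTheory.volume t1 t2 := fun t1 t2 ht1 ht2 =>
    (hch.mono (Set.uIcc_subset_Icc ht1 ht2)).intervalIntegrable
  have hsfun_eq : sfun = fun u => ∫ τ in α..u, h τ := funext hsfun
  have hscont : ContinuousOn sfun (Set.Icc α β) := by
    rw [hsfun_eq]
    have hio : MeasureTheory.IntegrableOn h (Set.uIcc α β) MeasureTheory.volume := by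
      rw [Set.uIcc_of_le hαβ']
      exact hch.integrableOn_Icc
    simpa [Set.uIcc_of_le hαβ'] using
      intervalIntegral.continuousOn_primitive_interval (a := α) (b := β) hio
  have hs0 : sfun α = 0 := by rw [hsfun]; exact intervalIntegral.integral_same
  have hsmono : ∀ t1 ∈ Set.Icc α β, ∀ t2 ∈ Set.Icc α β, t1 < t2 → sfun t1 < sfun t2 := by
    intro t1 ht1 t2 ht2 hlt
    have hadd : sfun t1 + ∫ τ in t1..t2, h τ = sfun t2 := by
      rw [hsfun t1, hsfun t2]
      exact intervalIntegral.integral_add_adjacent_intervals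
        (hint α t1 (Set.left_mem_Icc.mpr hαβ') ht1) (hint t1 t2 ht1 ht2)
    have hpos : 0 < ∫ τ in t1..t2, h τ := by
      apply intervalIntegral.intervalIntegral_pos_of_pos_on (hint t1 t2 ht1 ht2) _ hlt
      intro u hu
      have hu' : u ∈ Set.Icc α β := ⟨le_trans ht1.1 hu.1.le, le_trans hu.2.le ht2.2⟩
      rw [habs]
      exact abs_pos.mpr (hg1ne u hu')
    linarith
  -- inverse function facts
  have hexists : ∀ s ∈ Set.Icc 0 (sfun β), tfun s ∈ Set.Icc α β ∧ sfun (tfun s) = s := by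
    intro s hs
    have hs' : s ∈ Set.Icc (sfun α) (sfun β) := by rw [hs0]; exact hs
    obtain ⟨t, ht, hts⟩ := intermediate_value_Icc hαβ' hscont hs'
    rw [← hts, htfun₁ t ht]
    exact ⟨ht, rfl⟩
  -- the subinterval I on the t-side
  have hsubab : Set.Ioo c d ⊆ Set.Icc a b := fun s hs => (hsub hs).1
  have hsubS : Set.Ioo c d ⊆ Set.Icc 0 (sfun β) := fun s hs => (hsub hs).2
  have hIooab : Set.Ioo c d ⊆ Set.Ioo a b := by
    have hi := interior_maximal hsubab isOpen_Ioo
    rwa [interior_Icc] at hi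
  set sc : ℝ := c + (d - c) / 4 with hsc_def
  set sd : ℝ := d - (d - c) / 4 with hsd_def
  have hscm : sc ∈ Set.Ioo c d := ⟨by rw [hsc_def]; linarith, by rw [hsc_def]; linarith⟩
  have hsdm : sd ∈ Set.Ioo c d := ⟨by rw [hsd_def]; linarith, by rw [hsd_def]; linarith⟩
  have hscd : sc < sd := by rw [hsc_def, hsd_def]; linarith
  obtain ⟨hT1m, hT1s⟩ := hexists sc (hsubS hscm)
  obtain ⟨hT2m, hT2s⟩ := hexists sd (hsubS hsdm)
  set T1 := tfun sc with hT1_def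
  set T2 := tfun sd with hT2_def
  have hT12 : T1 < T2 := by
    by_contra hcon
    push_neg at hcon
    rcases lt_or_eq_of_le hcon with hl | he
    · have := hsmono T2 hT2m T1 hT1m hl
      rw [hT1s, hT2s] at this
      linarith
    · have : sd = sc := by rw [← hT1s, ← hT2s, he]
      linarith
  set I : Set ℝ := Set.Ioo T1 T2 with hI_def
  have hIsub : I ⊆ Set.Icc α β := fun t ht => ⟨le_trans hT1m.1 ht.1.le, le_trans ht.2.le hT2m.2⟩
  have hIoo : ∀ t ∈ I, t ∈ Set.Ioo α β := fun t ht =>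
    ⟨lt_of_le_of_lt hT1m.1 ht.1, lt_of_lt_of_le ht.2 hT2m.2⟩
  have hImap : ∀ t ∈ I, sfun t ∈ Set.Ioo c d := by
    intro t ht
    have h1' : sc < sfun t := by
      rw [← hT1s]; exact hsmono T1 hT1m t (hIsub ht) ht.1
    have h2' : sfun t < sd := by
      rw [← hT2s]; exact hsmono t (hIsub ht) T2 hT2m ht.2
    exact ⟨lt_trans hscm.1 h1', lt_trans h2' hsdm.2⟩
  -- full derivatives at points of I (t-side) and Ioo c d (s-side)
  have hnh : ∀ t ∈ I, Set.Icc α β ∈ nhds t := fun t ht =>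
    Icc_mem_nhds (hIoo t ht).1 (hIoo t ht).2
  have hnh' : ∀ s' ∈ Set.Ioo c d, Set.Icc a b ∈ nhds s' := fun s' hs' =>
    Icc_mem_nhds (hIooab hs').1 (hIooab hs').2
  have Dg1 : ∀ t ∈ I, HasDerivAt g1 (g3 t * g2 t) t := fun t ht =>
    (f1 t (hIsub ht)).hasDerivAt (hnh t ht)
  have Dg2 : ∀ t ∈ I, HasDerivAt g2 (-(g3 t * g1 t)) t := fun t ht =>
    (f2 t (hIsub ht)).hasDerivAt (hnh t ht)
  have Dg3 : ∀ t ∈ I, HasDerivAt g3 (-(g2 t * g1 t)) t := fun t ht =>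
    (f3 t (hIsub ht)).hasDerivAt (hnh t ht)
  have Dθt : ∀ t ∈ I, HasDerivAt θt (g2 t) t := fun t ht =>
    (fθ t (hIsub ht)).hasDerivAt (hnh t ht)
  have Dxt : ∀ t ∈ I, HasDerivAt xt (g1 t * Real.cos (θt t)) t := fun t ht =>
    (fx t (hIsub ht)).hasDerivAt (hnh t ht)
  have Dyt : ∀ t ∈ I, HasDerivAt yt (g1 t * Real.sin (θt t)) t := fun t ht =>
    (fy t (hIsub ht)).hasDerivAt (hnh t ht)
  have Dh1 : ∀ s' ∈ Set.Ioo c d, HasDerivAt h1 (h3 s' * h2 s') s' := fun s' hs' =>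
    (e1 s' (hsubab hs')).hasDerivAt (hnh' s' hs')
  have Dh2 : ∀ s' ∈ Set.Ioo c d, HasDerivAt h2 (-h3 s') s' := fun s' hs' =>
    (e2 s' (hsubab hs')).hasDerivAt (hnh' s' hs')
  have Dh3 : ∀ s' ∈ Set.Ioo c d, HasDerivAt h3 (-(h1 s' * h2 s')) s' := fun s' hs' =>
    (e3 s' (hsubab hs')).hasDerivAt (hnh' s' hs')
  have Dθ : ∀ s' ∈ Set.Ioo c d, HasDerivAt θ (h2 s') s' := fun s' hs' =>
    (eθ s' (hsubab hs')).hasDerivAt (hnh' s' hs')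
  have Dx : ∀ s' ∈ Set.Ioo c d, HasDerivAt x (Real.cos (θ s')) s' := fun s' hs' =>
    (ex s' (hsubab hs')).hasDerivAt (hnh' s' hs')
  have Dy : ∀ s' ∈ Set.Ioo c d, HasDerivAt y (Real.sin (θ s')) s' := fun s' hs' =>
    (ey s' (hsubab hs')).hasDerivAt (hnh' s' hs')
  -- derivative of sfun
  have Dsfun : ∀ t ∈ I, HasDerivAt sfun (σ * g1 t) t := by
    intro t ht
    have hmeas : StronglyMeasurableAtFilter h (nhds t) MeasureTheory.volume :=
      ContinuousOn.stronglyMeasurableAtFilter isOpen_Ioo (hch.mono Set.Ioo_subset_Icc_self)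
        t (hIoo t ht)
    have hcontAt : ContinuousAt h t := (hch t (hIsub ht)).continuousAt (hnh t ht)
    have H := intervalIntegral.integral_hasDerivAt_right
      (hint α t (Set.left_mem_Icc.mpr hαβ') (hIsub ht)) hmeas hcontAt
    rw [hsfun_eq, ← habs' t (hIsub ht)]
    exact H
  -- the coincidence on I
  have hkey : ∀ t ∈ I, x (sfun t) = xt t ∧ y (sfun t) = yt t := by
    intro t ht
    have hc := hcoin (sfun t) (hImap t ht)
    rw [htfun₁ t (hIsub ht)] at hc
    exact hc
  -- Step 1: matching of unit tangents
  have step1 : ∀ t ∈ I, Real.cos (θ (sfun t)) = σ * Real.cos (θt t) ∧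
      Real.sin (θ (sfun t)) = σ * Real.sin (θt t) := by
    intro t ht
    have hx1 : HasDerivAt (fun u => x (sfun u)) (Real.cos (θ (sfun t)) * (σ * g1 t)) t :=
      (Dx (sfun t) (hImap t ht)).comp t (Dsfun t ht)
    have hy1 : HasDerivAt (fun u => y (sfun u)) (Real.sin (θ (sfun t)) * (σ * g1 t)) t :=
      (Dy (sfun t) (hImap t ht)).comp t (Dsfun t ht)
    have e1' : Real.cos (θ (sfun t)) * (σ * g1 t) = g1 t * Real.cos (θt t) :=
      derivEq isOpen_Ioo ht (fun u hu => (hkey u hu).1) hx1 (Dxt t ht)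
    have e2' : Real.sin (θ (sfun t)) * (σ * g1 t) = g1 t * Real.sin (θt t) :=
      derivEq isOpen_Ioo ht (fun u hu => (hkey u hu).2) hy1 (Dyt t ht)
    have hg1t : g1 t ≠ 0 := hg1ne t (hIsub ht)
    constructor
    · have h0 : (Real.cos (θ (sfun t)) - σ * Real.cos (θt t)) * g1 t = 0 := by
        linear_combination σ * e1' + (-(Real.cos (θ (sfun t)) * g1 t)) * hσsq
      have := (mul_eq_zero.mp h0).resolve_right hg1t
      linarith
    · have h0 : (Real.sin (θ (sfun t)) - σ * Real.sin (θt t)) * g1 t = 0 := by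
        linear_combination σ * e2' + (-(Real.sin (θ (sfun t)) * g1 t)) * hσsq
      have := (mul_eq_zero.mp h0).resolve_right hg1t
      linarith
  -- Step 2: matching of curvatures
  have hA : ∀ t ∈ I, g1 t * h2 (sfun t) = σ * g2 t := by
    intro t ht
    have hθs : HasDerivAt (fun u => θ (sfun u)) (h2 (sfun t) * (σ * g1 t)) t :=
      (Dθ (sfun t) (hImap t ht)).comp t (Dsfun t ht)
    have hf1 : HasDerivAt (fun u => Real.cos (θ (sfun u)))
        (-Real.sin (θ (sfun t)) * (h2 (sfun t) * (σ * g1 t))) t :=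
      hθs.cos
    have hg1' : HasDerivAt (fun u => σ * Real.cos (θt u))
        (σ * (-Real.sin (θt t) * g2 t)) t :=
      ((Real.hasDerivAt_cos (θt t)).comp t (Dθt t ht)).const_mul σ
    have ec : -Real.sin (θ (sfun t)) * (h2 (sfun t) * (σ * g1 t)) =
        σ * (-Real.sin (θt t) * g2 t) :=
      derivEq isOpen_Ioo ht (fun u hu => (step1 u hu).1) hf1 hg1'
    have hf2 : HasDerivAt (fun u => Real.sin (θ (sfun u)))
        (Real.cos (θ (sfun t)) * (h2 (sfun t) * (σ * g1 t))) t :=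
      hθs.sin
    have hg2' : HasDerivAt (fun u => σ * Real.sin (θt u))
        (σ * (Real.cos (θt t) * g2 t)) t :=
      ((Real.hasDerivAt_sin (θt t)).comp t (Dθt t ht)).const_mul σ
    have es : Real.cos (θ (sfun t)) * (h2 (sfun t) * (σ * g1 t)) =
        σ * (Real.cos (θt t) * g2 t) :=
      derivEq isOpen_Ioo ht (fun u hu => (step1 u hu).2) hf2 hg2'
    obtain ⟨c1, s1⟩ := step1 t ht
    have py : Real.sin (θt t) ^ 2 + Real.cos (θt t) ^ 2 = 1 := Real.sin_sq_add_cos_sq _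
    linear_combination (-Real.sin (θt t)) * ec + Real.cos (θt t) * es
      - (σ ^ 2 * h2 (sfun t) * g1 t - σ * g2 t) * py
      - h2 (sfun t) * g1 t * hσsq
      - σ * h2 (sfun t) * g1 t * Real.sin (θt t) * s1
      - σ * h2 (sfun t) * g1 t * Real.cos (θt t) * c1
  -- conservation of g1² + g2²
  have hE : ∀ t ∈ Set.Icc α β, g1 t ^ 2 + g2 t ^ 2 = 1 := by
    have hder : ∀ u ∈ Set.Icc α β,
        HasDerivWithinAt (fun v => g1 v ^ 2 + g2 v ^ 2) 0 (Set.Icc α β) u := by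
      intro u hu
      have H := ((f1 u hu).pow 2).add ((f2 u hu).pow 2)
      refine H.congr_deriv ?_
      push_cast
      ring
    have hc := constOn (Set.left_mem_Icc.mpr hαβ') hder
    intro t ht
    have hct : g1 t ^ 2 + g2 t ^ 2 = g1 α ^ 2 + g2 α ^ 2 := hc t ht
    rw [hct, hunit]
  -- Step 3
  have hB : ∀ t ∈ I, g1 t ^ 3 * h3 (sfun t) = g3 t := by
    intro t ht
    have hh2s : HasDerivAt (fun u => h2 (sfun u)) (-h3 (sfun t) * (σ * g1 t)) t :=
      (Dh2 (sfun t) (hImap t ht)).comp t (Dsfun t ht)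
    have hf' : HasDerivAt (fun u => g1 u * h2 (sfun u))
        (g3 t * g2 t * h2 (sfun t) + g1 t * (-h3 (sfun t) * (σ * g1 t))) t :=
      (Dg1 t ht).mul hh2s
    have hg' : HasDerivAt (fun u => σ * g2 u) (σ * -(g3 t * g1 t)) t :=
      (Dg2 t ht).const_mul σ
    have eB : g3 t * g2 t * h2 (sfun t) + g1 t * (-h3 (sfun t) * (σ * g1 t)) =
        σ * -(g3 t * g1 t) :=
      derivEq isOpen_Ioo ht (fun u hu => hA u hu) hf' hg'
    have hAt := hA t ht
    have hEt := hE t (hIsub ht)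
    linear_combination (-(σ * g1 t)) * eB + σ * g3 t * g2 t * hAt
      - (g1 t ^ 3 * h3 (sfun t) - g3 t * g1 t ^ 2 - g3 t * g2 t ^ 2) * hσsq
      + g3 t * hEt
  -- Step 4
  have hC : ∀ t ∈ I, g2 t * (g1 t ^ 4 * h1 (sfun t) - g1 t ^ 2 - 3 * g3 t ^ 2) = 0 := by
    intro t ht
    have hh3s : HasDerivAt (fun u => h3 (sfun u)) (-(h1 (sfun t) * h2 (sfun t)) * (σ * g1 t)) t :=
      (Dh3 (sfun t) (hImap t ht)).comp t (Dsfun t ht)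
    have hf' : HasDerivAt (fun u => g1 u ^ 3 * h3 (sfun u))
        ((3 : ℕ) * g1 t ^ 2 * (g3 t * g2 t) * h3 (sfun t) +
          g1 t ^ 3 * (-(h1 (sfun t) * h2 (sfun t)) * (σ * g1 t))) t := by
      exact ((Dg1 t ht).pow 3).mul hh3s
    have eC : (3 : ℕ) * g1 t ^ 2 * (g3 t * g2 t) * h3 (sfun t) +
        g1 t ^ 3 * (-(h1 (sfun t) * h2 (sfun t)) * (σ * g1 t)) = -(g2 t * g1 t) :=
      derivEq isOpen_Ioo ht (fun u hu => hB u hu) hf' (Dg3 t ht)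
    have hAt := hA t ht
    have hBt := hB t ht
    have eC' : 3 * g1 t ^ 2 * (g3 t * g2 t) * h3 (sfun t) +
        g1 t ^ 3 * (-(h1 (sfun t) * h2 (sfun t)) * (σ * g1 t)) = -(g2 t * g1 t) := by
      push_cast at eC
      linarith [eC]
    linear_combination (-(g1 t)) * eC' + 3 * g3 t * g2 t * hBt
      + (-(σ * g1 t ^ 4 * h1 (sfun t))) * hAt
      + (-(g1 t ^ 4 * h1 (sfun t) * g2 t)) * hσsq
  -- the geodesic curvature vanishes on I
  have hg2I : ∀ t ∈ I, g2 t = 0 := by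
    by_contra hcon
    push_neg at hcon
    obtain ⟨t₀, ht₀, hne0⟩ := hcon
    have hcont2 : ContinuousAt g2 t₀ := (Dg2 t₀ ht₀).continuousAt
    have h1ev : ∀ᶠ u in nhds t₀, g2 u ≠ 0 := hcont2.eventually_ne hne0
    have h2ev : ∀ᶠ u in nhds t₀, u ∈ I := isOpen_Ioo.eventually_mem ht₀
    obtain ⟨U, hUsub, hUopen, hU0⟩ := eventually_nhds_iff.mp (h2ev.and h1ev)
    have hD : ∀ u ∈ U, g1 u ^ 4 * h1 (sfun u) = g1 u ^ 2 + 3 * g3 u ^ 2 := by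
      intro u hu
      have hP := (mul_eq_zero.mp (hC u (hUsub u hu).1)).resolve_left (hUsub u hu).2
      linarith
    have hg3U : ∀ u ∈ U, g3 u = 0 := by
      intro u hu
      by_contra hg3ne
      have huI := (hUsub u hu).1
      have hg1u : g1 u ≠ 0 := hg1ne u (hIsub huI)
      have hg2u : g2 u ≠ 0 := (hUsub u hu).2
      have hh1s : HasDerivAt (fun v => h1 (sfun v))
          (h3 (sfun u) * h2 (sfun u) * (σ * g1 u)) u :=
        (Dh1 (sfun u) (hImap u huI)).comp u (Dsfun u huI)
      have hf' : HasDerivAt (fun v => g1 v ^ 4 * h1 (sfun v))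
          ((4 : ℕ) * g1 u ^ 3 * (g3 u * g2 u) * h1 (sfun u) +
            g1 u ^ 4 * (h3 (sfun u) * h2 (sfun u) * (σ * g1 u))) u := by
        exact ((Dg1 u huI).pow 4).mul hh1s
      have hg' : HasDerivAt (fun v => g1 v ^ 2 + 3 * g3 v ^ 2)
          ((2 : ℕ) * g1 u ^ 1 * (g3 u * g2 u) + 3 * ((2 : ℕ) * g3 u ^ 1 * -(g2 u * g1 u))) u := by
        exact ((Dg1 u huI).pow 2).add (((Dg3 u huI).pow 2).const_mul 3)
      have eD : (4 : ℕ) * g1 u ^ 3 * (g3 u * g2 u) * h1 (sfun u) +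
          g1 u ^ 4 * (h3 (sfun u) * h2 (sfun u) * (σ * g1 u)) =
          (2 : ℕ) * g1 u ^ 1 * (g3 u * g2 u) + 3 * ((2 : ℕ) * g3 u ^ 1 * -(g2 u * g1 u)) :=
        derivEq hUopen hu hD hf' hg'
      have eD' : 4 * g1 u ^ 3 * (g3 u * g2 u) * h1 (sfun u) +
          g1 u ^ 4 * (h3 (sfun u) * h2 (sfun u) * (σ * g1 u)) =
          2 * g1 u ^ 1 * (g3 u * g2 u) + 3 * (2 * g3 u ^ 1 * -(g2 u * g1 u)) := by
        push_cast at eD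
        linarith [eD]
      have hAu := hA u huI
      have hBu := hB u huI
      have key : g1 u * g2 u * g3 u * (5 + 4 * g1 u ^ 2 * h1 (sfun u)) = 0 := by
        linear_combination eD' - σ * g1 u ^ 2 * h2 (sfun u) * hBu
          - σ * g1 u * g3 u * hAu - g1 u * g2 u * g3 u * hσsq
      have h5 : 5 + 4 * g1 u ^ 2 * h1 (sfun u) = 0 := by
        have := mul_eq_zero.mp key
        rcases this with h' | h'
        · exact absurd h' (by
            intro hz
            rcases mul_eq_zero.mp hz with hz' | hz'
            · rcases mul_eq_zero.mp hz' with hz'' | hz''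
              · exact hg1u hz''
              · exact hg2u hz''
            · exact hg3ne hz')
        · exact h'
      have hDu := hD u hu
      have hcontr : 9 * g1 u ^ 2 + 12 * g3 u ^ 2 = 0 := by
        linear_combination g1 u ^ 2 * h5 - 4 * hDu
      have : g1 u ^ 2 > 0 := by positivity
      nlinarith [sq_nonneg (g3 u)]
    -- g3 ≡ 0 on U forces g2 t₀ = 0, contradiction
    have e0 : -(g2 t₀ * g1 t₀) = 0 :=
      derivEq hUopen hU0 (fun u hu => hg3U u hu) (Dg3 t₀ ht₀) (hasDerivAt_const t₀ 0)
    have := (mul_eq_zero.mp (neg_eq_zero.mp e0)).resolve_right (hg1ne t₀ (hIsub ht₀))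
    exact hne0 this
  have hg3I : ∀ t ∈ I, g3 t = 0 := by
    intro t ht
    have e0 : -(g3 t * g1 t) = 0 :=
      derivEq isOpen_Ioo ht (fun u hu => hg2I u hu) (Dg2 t ht) (hasDerivAt_const t 0)
    exact (mul_eq_zero.mp (neg_eq_zero.mp e0)).resolve_right (hg1ne t (hIsub ht))
  -- a common zero of both curvature systems
  set tmid : ℝ := (T1 + T2) / 2 with htmid_def
  have htmid : tmid ∈ I := ⟨by rw [htmid_def]; linarith, by rw [htmid_def]; linarith⟩
  have hh2s0 : h2 (sfun tmid) = 0 := by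
    have hAt : g1 tmid * h2 (sfun tmid) = 0 := by
      have := hA tmid htmid
      rw [hg2I tmid htmid] at this
      simpa using this
    exact (mul_eq_zero.mp hAt).resolve_left (hg1ne tmid (hIsub htmid))
  have hh3s0 : h3 (sfun tmid) = 0 := by
    have hBt := hB tmid htmid
    rw [hg3I tmid htmid] at hBt
    rcases mul_eq_zero.mp hBt with h' | h'
    · exact absurd (pow_eq_zero_iff (by norm_num : (3:ℕ) ≠ 0) |>.mp h')
        (hg1ne tmid (hIsub htmid))
    · exact h'
  -- the elastica curvature system vanishes identically on [a,b]
  obtain ⟨M, hM⟩ := isCompact_Icc.exists_bound_of_continuousOn ch1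
  have hMnn : 0 ≤ M := le_trans (norm_nonneg _) (hM a (Set.left_mem_Icc.mpr hab'))
  have hs0mem : sfun tmid ∈ Set.Icc a b := hsubab (hImap tmid htmid)
  have hzero : ∀ s ∈ Set.Icc a b, h2 s = 0 ∧ h3 s = 0 := by
    have key : ∀ s ∈ Set.Icc a b, h2 s ^ 2 + h3 s ^ 2 = 0 := by
      refine gronZero (K := 1 + M) (t₀ := sfun tmid)
        (f := fun s => h2 s ^ 2 + h3 s ^ 2)
        (f' := fun s => 2 * h2 s * (-h3 s) + 2 * h3 s * (-(h1 s * h2 s)))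
        hs0mem ?_ ?_ ?_
      · intro u hu
        show HasDerivWithinAt (fun s => h2 s ^ 2 + h3 s ^ 2)
          (2 * h2 u * (-h3 u) + 2 * h3 u * (-(h1 u * h2 u))) (Set.Icc a b) u
        have H := ((e2 u hu).pow 2).add ((e3 u hu).pow 2)
        refine H.congr_deriv ?_
        push_cast
        ring
      · intro u hu
        show |2 * h2 u * (-h3 u) + 2 * h3 u * (-(h1 u * h2 u))| ≤
          (1 + M) * |h2 u ^ 2 + h3 u ^ 2|
        have hM1 : |h1 u| ≤ M := by
          have := hM u hu
          rwa [Real.norm_eq_abs] at this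
        rw [show (2 * h2 u * (-h3 u) + 2 * h3 u * (-(h1 u * h2 u)))
            = (2 * h2 u * h3 u) * (-(1 + h1 u)) by ring, abs_mul, abs_neg]
        have e2' : |2 * h2 u * h3 u| ≤ h2 u ^ 2 + h3 u ^ 2 := by
          rw [abs_mul, abs_mul, abs_two]
          nlinarith [sq_nonneg (|h2 u| - |h3 u|), sq_abs (h2 u), sq_abs (h3 u),
            abs_nonneg (h2 u), abs_nonneg (h3 u)]
        have e3' : |1 + h1 u| ≤ 1 + M := by
          calc |1 + h1 u| ≤ |(1:ℝ)| + |h1 u| := abs_add_le _ _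
            _ ≤ 1 + M := by rw [abs_one]; linarith
        have e4 : |2 * h2 u * h3 u| * |1 + h1 u| ≤ (h2 u ^ 2 + h3 u ^ 2) * (1 + M) :=
          mul_le_mul e2' e3' (abs_nonneg _) (by positivity)
        have e5 : |h2 u ^ 2 + h3 u ^ 2| = h2 u ^ 2 + h3 u ^ 2 := abs_of_nonneg (by positivity)
        rw [e5, mul_comm (1 + M)]
        exact e4
      · show h2 (sfun tmid) ^ 2 + h3 (sfun tmid) ^ 2 = 0
        rw [hh2s0, hh3s0]
        norm_num
    intro s hs
    have hks := key s hs
    constructor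
    · have h2z : h2 s ^ 2 = 0 := by nlinarith [sq_nonneg (h2 s), sq_nonneg (h3 s)]
      exact pow_eq_zero_iff (by norm_num : (2:ℕ) ≠ 0) |>.mp h2z
    · have h3z : h3 s ^ 2 = 0 := by nlinarith [sq_nonneg (h2 s), sq_nonneg (h3 s)]
      exact pow_eq_zero_iff (by norm_num : (2:ℕ) ≠ 0) |>.mp h3z
  -- the geodesic curvature system vanishes identically on [α,β]
  obtain ⟨M', hM'⟩ := isCompact_Icc.exists_bound_of_continuousOn cg1
  have hM'nn : 0 ≤ M' := le_trans (norm_nonneg _) (hM' α (Set.left_mem_Icc.mpr hαβ'))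
  have hgzero : ∀ t ∈ Set.Icc α β, g2 t = 0 ∧ g3 t = 0 := by
    have key : ∀ t ∈ Set.Icc α β, g2 t ^ 2 + g3 t ^ 2 = 0 := by
      refine gronZero (K := 2 * M') (t₀ := tmid)
        (f := fun t => g2 t ^ 2 + g3 t ^ 2)
        (f' := fun t => 2 * g2 t * (-(g3 t * g1 t)) + 2 * g3 t * (-(g2 t * g1 t)))
        (hIsub htmid) ?_ ?_ ?_
      · intro u hu
        show HasDerivWithinAt (fun t => g2 t ^ 2 + g3 t ^ 2)
          (2 * g2 u * (-(g3 u * g1 u)) + 2 * g3 u * (-(g2 u * g1 u))) (Set.Icc α β) u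
        have H := ((f2 u hu).pow 2).add ((f3 u hu).pow 2)
        refine H.congr_deriv ?_
        push_cast
        ring
      · intro u hu
        show |2 * g2 u * (-(g3 u * g1 u)) + 2 * g3 u * (-(g2 u * g1 u))| ≤
          (2 * M') * |g2 u ^ 2 + g3 u ^ 2|
        have hM1 : |g1 u| ≤ M' := by
          have := hM' u hu
          rwa [Real.norm_eq_abs] at this
        rw [show (2 * g2 u * (-(g3 u * g1 u)) + 2 * g3 u * (-(g2 u * g1 u)))
            = (2 * g2 u * g3 u) * (-(2 * g1 u)) by ring, abs_mul, abs_neg]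
        have e2' : |2 * g2 u * g3 u| ≤ g2 u ^ 2 + g3 u ^ 2 := by
          rw [abs_mul, abs_mul, abs_two]
          nlinarith [sq_nonneg (|g2 u| - |g3 u|), sq_abs (g2 u), sq_abs (g3 u),
            abs_nonneg (g2 u), abs_nonneg (g3 u)]
        have e3' : |2 * g1 u| ≤ 2 * M' := by
          rw [abs_mul, abs_two]
          linarith
        have e4 : |2 * g2 u * g3 u| * |2 * g1 u| ≤ (g2 u ^ 2 + g3 u ^ 2) * (2 * M') :=
          mul_le_mul e2' e3' (abs_nonneg _) (by positivity)
        have e5 : |g2 u ^ 2 + g3 u ^ 2| = g2 u ^ 2 + g3 u ^ 2 := abs_of_nonneg (by positivity)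
        rw [e5, mul_comm (2 * M')]
        exact e4
      · show g2 tmid ^ 2 + g3 tmid ^ 2 = 0
        rw [hg2I tmid htmid, hg3I tmid htmid]
        norm_num
    intro t ht
    have hkt := key t ht
    constructor
    · have hz : g2 t ^ 2 = 0 := by nlinarith [sq_nonneg (g2 t), sq_nonneg (g3 t)]
      exact pow_eq_zero_iff (by norm_num : (2:ℕ) ≠ 0) |>.mp hz
    · have hz : g3 t ^ 2 = 0 := by nlinarith [sq_nonneg (g2 t), sq_nonneg (g3 t)]
      exact pow_eq_zero_iff (by norm_num : (2:ℕ) ≠ 0) |>.mp hz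
  -- θ is constant; x and y are affine
  have hθc : ∀ s ∈ Set.Icc a b, θ s = θ a := by
    refine constOn (Set.left_mem_Icc.mpr hab') ?_
    intro s hs
    have H := eθ s hs
    rw [(hzero s hs).1] at H
    exact H
  have hxaff : ∀ s ∈ Set.Icc a b, x s = (x a - a * Real.cos (θ a)) + s * Real.cos (θ a) := by
    have hc : ∀ s ∈ Set.Icc a b,
        (fun s => x s - s * Real.cos (θ a)) s = (fun s => x s - s * Real.cos (θ a)) a := by
      refine constOn (Set.left_mem_Icc.mpr hab') ?_
      intro s hs
      have H := ex s hs
      rw [hθc s hs] at H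
      have H2 := H.sub ((hasDerivWithinAt_id s (Set.Icc a b)).mul_const (Real.cos (θ a)))
      refine H2.congr_deriv ?_
      ring
    intro s hs
    have := hc s hs
    simp only at this
    linarith
  have hyaff : ∀ s ∈ Set.Icc a b, y s = (y a - a * Real.sin (θ a)) + s * Real.sin (θ a) := by
    have hc : ∀ s ∈ Set.Icc a b,
        (fun s => y s - s * Real.sin (θ a)) s = (fun s => y s - s * Real.sin (θ a)) a := by
      refine constOn (Set.left_mem_Icc.mpr hab') ?_
      intro s hs
      have H := ey s hs
      rw [hθc s hs] at H
      have H2 := H.sub ((hasDerivWithinAt_id s (Set.Icc a b)).mul_const (Real.sin (θ a)))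
      refine H2.congr_deriv ?_
      ring
    intro s hs
    have := hc s hs
    simp only at this
    linarith
  -- g1 and θt are constant
  have hg1c : ∀ t ∈ Set.Icc α β, g1 t = g1 α := by
    refine constOn (Set.left_mem_Icc.mpr hαβ') ?_
    intro t ht
    have H := f1 t ht
    rw [(hgzero t ht).1] at H
    simpa using H
  have hθtc : ∀ t ∈ Set.Icc α β, θt t = θt α := by
    refine constOn (Set.left_mem_Icc.mpr hαβ') ?_
    intro t ht
    have H := fθ t ht
    rw [(hgzero t ht).1] at H
    exact H
  have hg2zα : g2 α = 0 := (hgzero α (Set.left_mem_Icc.mpr hαβ')).1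
  have hg1α : g1 α ^ 2 = 1 := by
    have := hunit
    rw [hg2zα] at this
    simpa using this
  have hg1abs : |g1 α| = 1 := by
    have h' : (g1 α - 1) * (g1 α + 1) = 0 := by linear_combination hg1α
    rcases mul_eq_zero.mp h' with h'' | h''
    · rw [show g1 α = 1 by linarith]
      exact abs_one
    · rw [show g1 α = -1 by linarith]
      simp
  -- xt, yt are affine in t
  have hxtaff : ∀ t ∈ Set.Icc α β,
      xt t = xt α + (t - α) * (g1 α * Real.cos (θt α)) := by
    have hc : ∀ t ∈ Set.Icc α β,
        (fun t => xt t - t * (g1 α * Real.cos (θt α))) t =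
          (fun t => xt t - t * (g1 α * Real.cos (θt α))) α := by
      refine constOn (Set.left_mem_Icc.mpr hαβ') ?_
      intro t ht
      have H := fx t ht
      rw [hg1c t ht, hθtc t ht] at H
      have H2 := H.sub ((hasDerivWithinAt_id t (Set.Icc α β)).mul_const
        (g1 α * Real.cos (θt α)))
      refine H2.congr_deriv ?_
      ring
    intro t ht
    have := hc t ht
    simp only at this
    linarith
  have hytaff : ∀ t ∈ Set.Icc α β,
      yt t = yt α + (t - α) * (g1 α * Real.sin (θt α)) := by
    have hc : ∀ t ∈ Set.Icc α β,
        (fun t => yt t - t * (g1 α * Real.sin (θt α))) t =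
          (fun t => yt t - t * (g1 α * Real.sin (θt α))) α := by
      refine constOn (Set.left_mem_Icc.mpr hαβ') ?_
      intro t ht
      have H := fy t ht
      rw [hg1c t ht, hθtc t ht] at H
      have H2 := H.sub ((hasDerivWithinAt_id t (Set.Icc α β)).mul_const
        (g1 α * Real.sin (θt α)))
      refine H2.congr_deriv ?_
      ring
    intro t ht
    have := hc t ht
    simp only at this
    linarith
  -- sfun is linear
  have hslin : ∀ t ∈ Set.Icc α β, sfun t = t - α := by
    intro t ht
    rw [hsfun t]
    have hEq1 : Set.EqOn (fun τ => Real.sqrt ((g1 τ * Real.cos (θt τ)) ^ 2 +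
        (g1 τ * Real.sin (θt τ)) ^ 2)) (fun _ => (1:ℝ)) (Set.uIcc α t) := by
      intro τ hτ
      have hτ' : τ ∈ Set.Icc α β := by
        rw [Set.uIcc_of_le ht.1] at hτ
        exact ⟨hτ.1, le_trans hτ.2 ht.2⟩
      show h τ = 1
      rw [habs, hg1c τ hτ', hg1abs]
    rw [intervalIntegral.integral_congr hEq1, intervalIntegral.integral_const]
    simp
  -- assemble the conclusion
  refine ⟨fun s hs => (hzero s hs).1, fun t ht => (hgzero t ht).1,
    x a - a * Real.cos (θ a), y a - a * Real.sin (θ a), xt α, yt α,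
    Real.cos (θ a), Real.sin (θ a), g1 α * Real.cos (θt α), g1 α * Real.sin (θt α),
    ?_, ?_, ?_, ?_⟩
  · exact Real.cos_sq_add_sin_sq _
  · have py := Real.sin_sq_add_cos_sq (θt α)
    linear_combination g1 α ^ 2 * py + hg1α
  · intro s hs
    exact ⟨hxaff s hs, hyaff s hs⟩
  · intro s hs
    obtain ⟨htm, hts⟩ := hexists s hs
    have hts' : tfun s - α = s := by
      rw [← hslin (tfun s) htm]
      exact hts
    constructor
    · rw [hxtaff (tfun s) htm, hts']
    · rw [hytaff (tfun s) htm, hts']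
end
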